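/- If w = s ++ t ++ u is a counterexample for regular expressions p and q over an alphabet Σ, with t nonempty, L(δ_s p) = L(δ_{s++t} p), and L(δ_s q) = L(δ_{s++t} q), then s ++ u is also a counterexample for p and q, and s ++ u is strictly shorter than w. -/
import Mathlib

open RegularExpression

variable {α : Type*}

/-- The derivative of a regular expression with respect to a string,
folding the Brzozowski character derivative over the string. -/
def derivs [DecidableEq α] (p : RegularExpression α) (w : List α) : RegularExpression α :=
  w.foldl RegularExpression.deriv p

/-- `w` is a counterexample for `p` and `q` if exactly one of them accepts `w`. -/
def Counterexample (p q : RegularExpression α) (w : List α) : Prop :=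
  Xor' (w ∈ p.matches') (w ∈ q.matches')

/-- A string `w` is reducible (for `p` and `q`) if `w = s ++ t ++ u` with `t` nonempty,
`L(δ_s p) = L(δ_{s++t} p)` and `L(δ_s q) = L(δ_{s++t} q)`. -/
def Reducible [DecidableEq α] (p q : RegularExpression α) (w : List α) : Prop :=
  ∃ s t u : List α, w = s ++ t ++ u ∧ t ≠ [] ∧
    (derivs p s).matches' = (derivs p (s ++ t)).matches' ∧
    (derivs q s).matches' = (derivs q (s ++ t)).matches'

/-- `Sync s p q` : `p` and `q` have no irreducible counterexample having `s` as a prefix. -/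
def Sync [DecidableEq α] (s : List α) (p q : RegularExpression α) : Prop :=
  ∀ w : List α, s <+: w → Counterexample p q w → Reducible p q w

lemma mem_derivs [DecidableEq α] (p : RegularExpression α) (s u : List α) :
    s ++ u ∈ p.matches' ↔ u ∈ (derivs p s).matches' := by
  induction s generalizing p with
  | nil => rfl
  | cons a s ih =>
    have : derivs p (a :: s) = derivs (p.deriv a) s := rfl
    rw [this, ← ih, List.cons_append, ← rmatch_iff_matches', ← rmatch_iff_matches', rmatch]

theorem reducible_counterexample_shorter [DecidableEq α] (p q : RegularExpression α)
    (s t u : List α)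
    (hce : Counterexample p q (s ++ t ++ u)) (ht : t ≠ [])
    (hp : (derivs p s).matches' = (derivs p (s ++ t)).matches')
    (hq : (derivs q s).matches' = (derivs q (s ++ t)).matches') :
    Counterexample p q (s ++ u) ∧ (s ++ u).length < (s ++ t ++ u).length := by
  constructor
  · have h1 : (s ++ u ∈ p.matches') ↔ (s ++ t ++ u ∈ p.matches') := by
      rw [mem_derivs p s u, hp, ← mem_derivs p (s++t) u]
    have h2 : (s ++ u ∈ q.matches') ↔ (s ++ t ++ u ∈ q.matches') := by
      rw [mem_derivs q s u, hq, ← mem_derivs q (s++t) u]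
    unfold Counterexample at *
    rw [h1, h2]; exact hce
  · simp [List.length_append]
    exact List.length_pos_iff.mpr ht
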